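/- Let Γ = (G, σ) be a connected signed graph on n vertices with Laplacian eigenvalues μ₁ ≥ ⋯ ≥ μₙ and vertex degrees d₁ ≥ ⋯ ≥ dₙ. Then for every k with 1 ≤ k ≤ n − 1, the strict inequality Σ_{i=1}^k μᵢ(Γ) > Σ_{i=1}^k dᵢ(Γ) holds. -/

import Mathlib

open Matrix Polynomial Finset

/-- Characteristic polynomial is invariant under unitary conjugation. -/
lemma aux_charpoly_conj_unitary {n : ℕ} (U : Matrix.unitaryGroup (Fin n) ℝ)
    (M : Matrix (Fin n) (Fin n) ℝ) :
    ((U : Matrix (Fin n) (Fin n) ℝ) * M * star (U : Matrix (Fin n) (Fin n) ℝ)).charpoly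
      = M.charpoly := by
  set V : Matrix (Fin n) (Fin n) ℝ := (U : Matrix (Fin n) (Fin n) ℝ) with hV
  have h1 : V * star V = 1 := Matrix.mem_unitaryGroup_iff.mp U.2
  have key : charmatrix (V * M * star V)
      = (C : ℝ →+* ℝ[X]).mapMatrix V * charmatrix M * (C : ℝ →+* ℝ[X]).mapMatrix (star V) := by
    rw [charmatrix, charmatrix, mul_sub, sub_mul]
    have hc : Matrix.scalar (Fin n) (X : ℝ[X]) * (C : ℝ →+* ℝ[X]).mapMatrix V
        = (C : ℝ →+* ℝ[X]).mapMatrix V * Matrix.scalar (Fin n) (X : ℝ[X]) :=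
      (Matrix.scalar_commute _ (fun r' => Commute.all _ _) _).eq
    congr 1
    · calc Matrix.scalar (Fin n) (X : ℝ[X])
          = Matrix.scalar (Fin n) (X : ℝ[X]) * ((C : ℝ →+* ℝ[X]).mapMatrix V *
              (C : ℝ →+* ℝ[X]).mapMatrix (star V)) := by
            rw [← _root_.map_mul, h1, _root_.map_one, mul_one]
        _ = (C : ℝ →+* ℝ[X]).mapMatrix V * Matrix.scalar (Fin n) (X : ℝ[X]) *
              (C : ℝ →+* ℝ[X]).mapMatrix (star V) := by
            rw [← mul_assoc, hc]
    · rw [← _root_.map_mul, ← _root_.map_mul]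
  have hdet : ((C : ℝ →+* ℝ[X]).mapMatrix V).det * ((C : ℝ →+* ℝ[X]).mapMatrix (star V)).det
      = 1 := by
    rw [← RingHom.map_det, ← RingHom.map_det, ← _root_.map_mul, ← Matrix.det_mul, h1,
      Matrix.det_one, _root_.map_one]
  rw [Matrix.charpoly, key, Matrix.det_mul, Matrix.det_mul, Matrix.charpoly, mul_right_comm,
    hdet, one_mul]

/-- Characteristic polynomial of a diagonal matrix. -/
lemma aux_charpoly_diagonal {n : ℕ} (v : Fin n → ℝ) :
    (Matrix.diagonal v).charpoly = ∏ i, (X - C (v i)) := by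
  have h : charmatrix (Matrix.diagonal v) = Matrix.diagonal (fun i => X - C (v i)) := by
    ext i j
    by_cases hij : i = j
    · subst hij; simp
    · rw [charmatrix_apply_ne _ _ _ hij, Matrix.diagonal_apply_ne _ hij,
        Matrix.diagonal_apply_ne _ hij, map_zero, neg_zero]
  rw [Matrix.charpoly, h, Matrix.det_diagonal]

/-- A real PSD matrix with a zero diagonal entry has the whole corresponding row zero. -/
lemma aux_psd_row_zero {n : ℕ} {M : Matrix (Fin n) (Fin n) ℝ} (hM : M.PosSemidef)
    {i : Fin n} (h : M i i = 0) (j : Fin n) : M i j = 0 := by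
  obtain ⟨B, rfl⟩ : ∃ B : Matrix (Fin n) (Fin n) ℝ, M = Bᴴ * B := by
    open scoped MatrixOrder in
    exact (CStarAlgebra.nonneg_iff_eq_star_mul_self.mp hM.nonneg).imp fun B h => h
  have hii : ∑ l, B l i * B l i = 0 := by
    simpa [Matrix.mul_apply, Matrix.conjTranspose_apply] using h
  have hz : ∀ l ∈ Finset.univ, B l i * B l i = 0 :=
    (Finset.sum_eq_zero_iff_of_nonneg (fun l _ => mul_self_nonneg (B l i))).mp hii
  have hcol : ∀ l, B l i = 0 := fun l => mul_self_eq_zero.mp (hz l (Finset.mem_univ l))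
  simp [Matrix.mul_apply, Matrix.conjTranspose_apply, hcol]

/-- Real PSD matrices have nonnegative diagonal. -/
lemma aux_psd_diag_nonneg {n : ℕ} {M : Matrix (Fin n) (Fin n) ℝ} (hM : M.PosSemidef)
    (i : Fin n) : 0 ≤ M i i := by
  obtain ⟨B, rfl⟩ : ∃ B : Matrix (Fin n) (Fin n) ℝ, M = Bᴴ * B := by
    open scoped MatrixOrder in
    exact (CStarAlgebra.nonneg_iff_eq_star_mul_self.mp hM.nonneg).imp fun B h => h
  have : (Bᴴ * B) i i = ∑ l, B l i * B l i := by
    simp [Matrix.mul_apply, Matrix.conjTranspose_apply]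
  rw [this]
  exact Finset.sum_nonneg fun l _ => mul_self_nonneg _

/-- (Hou–Li–Pan conjecture) For a connected signed graph, for every
1 ≤ k ≤ n − 1, the sum of the k largest Laplacian eigenvalues is strictly
greater than the sum of the k largest vertex degrees. -/
theorem stmt_15 {n : ℕ} (G : SimpleGraph (Fin n)) [DecidableRel G.Adj]
    (hconn : G.Connected)
    (σ : Fin n → Fin n → ℝ)
    (hσ : ∀ i j, G.Adj i j → σ i j = 1 ∨ σ i j = -1)
    (hsym : ∀ i j, σ i j = σ j i)
    (L : Matrix (Fin n) (Fin n) ℝ)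
    (hL : L = fun i j => (if i = j then (G.degree i : ℝ) else 0) -
      (if G.Adj i j then σ i j else 0))
    (μ : Fin n → ℝ) (hmono : Antitone μ)
    (hchar : L.charpoly = ∏ i, (X - C (μ i)))
    (d : Fin n → ℕ) (hd : Antitone d)
    (e : Fin n ≃ Fin n) (hde : ∀ i, d i = G.degree (e i))
    (k : ℕ) (hk1 : 1 ≤ k) (hk2 : k ≤ n - 1) :
    ∑ i ∈ Finset.univ.filter (fun i : Fin n => (i : ℕ) < k), (d i : ℝ) <
      ∑ i ∈ Finset.univ.filter (fun i : Fin n => (i : ℕ) < k), μ i := by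
  classical
  have hn2 : 2 ≤ n := by omega
  have hkn : k < n := by omega
  -- L is symmetric
  have hLsym : L.IsHermitian := by
    ext i j
    rw [Matrix.conjTranspose_apply, hL]
    simp only [star_trivial]
    by_cases hij : i = j
    · subst hij; rfl
    · have hji : ¬ j = i := fun hh => hij hh.symm
      have hadj : G.Adj j i ↔ G.Adj i j := G.adj_comm j i
      simp [hij, hji, hadj, hsym j i]
  set ev : Fin n → ℝ := hLsym.eigenvalues with hev
  set V : Matrix (Fin n) (Fin n) ℝ := (hLsym.eigenvectorUnitary : Matrix (Fin n) (Fin n) ℝ)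
    with hVdef
  have hVV : V * star V = 1 := Matrix.mem_unitaryGroup_iff.mp hLsym.eigenvectorUnitary.2
  have hVV' : star V * V = 1 := Matrix.mem_unitaryGroup_iff'.mp hLsym.eigenvectorUnitary.2
  have hspec : L = V * Matrix.diagonal ev * star V := by
    have := hLsym.spectral_theorem
    simpa using this
  -- the characteristic polynomial in terms of eigenvalues
  have hchar2 : L.charpoly = ∏ i, (X - C (ev i)) := by
    conv_lhs => rw [hspec]
    rw [aux_charpoly_conj_unitary hLsym.eigenvectorUnitary, aux_charpoly_diagonal]
  -- multisets of μ and ev agree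
  have hmult : Multiset.map μ Finset.univ.val = Multiset.map ev Finset.univ.val := by
    have h1 : (Multiset.map (fun a => X - C a) (Multiset.map μ Finset.univ.val)).prod
        = (Multiset.map (fun a => X - C a) (Multiset.map ev Finset.univ.val)).prod := by
      rw [Multiset.map_map, Multiset.map_map]
      simp only [Function.comp_def]
      rw [← Finset.prod_eq_multiset_prod, ← Finset.prod_eq_multiset_prod, ← hchar, ← hchar2]
    have h2 := congrArg Polynomial.roots h1
    rwa [Polynomial.roots_multiset_prod_X_sub_C, Polynomial.roots_multiset_prod_X_sub_C] at h2
  have hsum_eq : ∀ f : ℝ → ℝ, ∑ i, f (μ i) = ∑ i, f (ev i) := by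
    intro f
    rw [Finset.sum_eq_multiset_sum, Finset.sum_eq_multiset_sum]
    rw [show (Multiset.map (fun i => f (μ i)) Finset.univ.val)
        = Multiset.map f (Multiset.map μ Finset.univ.val) by rw [Multiset.map_map]; rfl]
    rw [show (Multiset.map (fun i => f (ev i)) Finset.univ.val)
        = Multiset.map f (Multiset.map ev Finset.univ.val) by rw [Multiset.map_map]; rfl]
    rw [hmult]
  set kk : Fin n := ⟨k, hkn⟩ with hkk
  set c : ℝ := μ kk with hc
  -- the filter set and its cardinality
  have hfilter : (Finset.univ.filter fun i : Fin n => (i : ℕ) < k) = Finset.Iio kk := by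
    ext i
    simp [Fin.lt_def, hkk]
  have hcard : (Finset.univ.filter fun i : Fin n => (i : ℕ) < k).card = k := by
    rw [hfilter, Fin.card_Iio]
  -- sum of positive parts
  have hgap : ∑ i, max (μ i - c) 0
      = (∑ i ∈ Finset.univ.filter (fun i : Fin n => (i : ℕ) < k), μ i) - k * c := by
    rw [← Finset.sum_filter_add_sum_filter_not Finset.univ (fun i : Fin n => (i : ℕ) < k)
      (fun i => max (μ i - c) 0)]
    have hA : ∀ i ∈ Finset.univ.filter (fun i : Fin n => (i : ℕ) < k),
        max (μ i - c) 0 = μ i - c := by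
      intro i hi
      simp only [Finset.mem_filter] at hi
      have hle : i ≤ kk := by
        rw [Fin.le_def]
        exact Nat.le_of_lt hi.2
      exact max_eq_left (by linarith [hmono hle])
    have hB : ∀ i ∈ Finset.univ.filter (fun i : Fin n => ¬ (i : ℕ) < k),
        max (μ i - c) 0 = 0 := by
      intro i hi
      simp only [Finset.mem_filter] at hi
      have hle : kk ≤ i := by
        rw [Fin.le_def]
        exact Nat.le_of_not_lt hi.2
      exact max_eq_right (by linarith [hmono hle])
    rw [Finset.sum_congr rfl hA, Finset.sum_eq_zero hB, add_zero, Finset.sum_sub_distrib,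
      Finset.sum_const, hcard, nsmul_eq_mul]
  -- the set of top-degree vertices
  set S : Finset (Fin n) := (Finset.univ.filter fun i : Fin n => (i : ℕ) < k).image e with hS
  have hScard : S.card = k := by
    rw [hS, Finset.card_image_of_injective _ e.injective, hcard]
  have hSdeg : ∑ v ∈ S, (G.degree v : ℝ)
      = ∑ i ∈ Finset.univ.filter (fun i : Fin n => (i : ℕ) < k), (d i : ℝ) := by
    rw [hS, Finset.sum_image (fun a _ b _ hab => e.injective hab)]
    exact Finset.sum_congr rfl fun i _ => by rw [hde i]
  -- a cross edge exists
  obtain ⟨a, b, hab, haS, hbS⟩ : ∃ a b, G.Adj a b ∧ a ∈ S ∧ b ∉ S := by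
    have hSne : S.Nonempty := Finset.card_pos.mp (by omega)
    have hSne' : ∃ v, v ∉ S := by
      by_contra hcon
      push_neg at hcon
      have : S = Finset.univ := Finset.eq_univ_iff_forall.mpr hcon
      rw [this, Finset.card_univ, Fintype.card_fin] at hScard
      omega
    obtain ⟨u, hu⟩ := hSne
    obtain ⟨v, hv⟩ := hSne'
    obtain ⟨w⟩ := hconn.preconnected u v
    obtain ⟨dart, _, hd1, hd2⟩ := w.exists_boundary_dart (↑S : Set (Fin n))
      (by simpa using hu) (by simpa using hv)
    exact ⟨dart.fst, dart.snd, dart.adj, by simpa using hd1, by simpa using hd2⟩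
  -- assume the inequality fails
  by_contra hcon
  push_neg at hcon
  -- positive and negative parts of L - c • 1
  set P : Matrix (Fin n) (Fin n) ℝ :=
    V * Matrix.diagonal (fun j => max (ev j - c) 0) * star V with hP
  set N : Matrix (Fin n) (Fin n) ℝ :=
    V * Matrix.diagonal (fun j => max (c - ev j) 0) * star V with hN
  have hPsd : P.PosSemidef := by
    rw [hP, Matrix.star_eq_conjTranspose]
    exact (Matrix.PosSemidef.diagonal fun j => le_max_right _ _).mul_mul_conjTranspose_same V
  have hNsd : N.PosSemidef := by
    rw [hN, Matrix.star_eq_conjTranspose]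
    exact (Matrix.PosSemidef.diagonal fun j => le_max_right _ _).mul_mul_conjTranspose_same V
  have hPN : P - N = L - c • (1 : Matrix (Fin n) (Fin n) ℝ) := by
    have hdd : Matrix.diagonal (fun j => max (ev j - c) 0)
        - Matrix.diagonal (fun j => max (c - ev j) 0)
        = Matrix.diagonal ev - c • (1 : Matrix (Fin n) (Fin n) ℝ) := by
      rw [Matrix.smul_one_eq_diagonal, Matrix.diagonal_sub, Matrix.diagonal_sub]
      refine congrArg Matrix.diagonal (funext fun j => ?_)
      rcases le_total c (ev j) with h | h
      · rw [max_eq_left (by linarith), max_eq_right (by linarith)]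
        ring
      · rw [max_eq_right (by linarith), max_eq_left (by linarith)]
        ring
    rw [hP, hN, ← sub_mul, ← Matrix.mul_sub, hdd, Matrix.mul_sub, sub_mul, ← hspec]
    congr 1
    rw [Matrix.mul_smul, mul_one, Matrix.smul_mul, hVV]
  -- trace of P
  have htrP : P.trace = ∑ j, max (ev j - c) 0 := by
    rw [hP, Matrix.trace_mul_cycle, hVV', one_mul, Matrix.trace_diagonal]
  -- diagonal entries of L are the degrees
  have hLdiag : ∀ v, L v v = (G.degree v : ℝ) := by
    intro v
    rw [hL]
    simp [G.irrefl]
  -- key chain of inequalities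
  have hPmN : ∀ v, P v v - N v v = L v v - c * (if v = v then (1:ℝ) else 0) := by
    intro v
    have := congrFun (congrFun hPN v) v
    simpa [Matrix.sub_apply, Matrix.smul_apply, Matrix.one_apply] using this
  have hsumS : ∑ v ∈ S, (P v v - N v v)
      = (∑ i ∈ Finset.univ.filter (fun i : Fin n => (i : ℕ) < k), (d i : ℝ)) - k * c := by
    have h1 : ∀ v ∈ S, P v v - N v v = (G.degree v : ℝ) - c := by
      intro v _
      rw [hPmN v, hLdiag v, if_pos rfl, mul_one]
    rw [Finset.sum_congr rfl h1, Finset.sum_sub_distrib, Finset.sum_const, hScard,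
      nsmul_eq_mul, hSdeg]
  -- trace P as a function of μ
  have htrP2 : P.trace
      = (∑ i ∈ Finset.univ.filter (fun i : Fin n => (i : ℕ) < k), μ i) - k * c := by
    rw [htrP, ← hsum_eq (fun x => max (x - c) 0), hgap]
  -- squeeze
  have hineq1 : P.trace ≤ ∑ v ∈ S, (P v v - N v v) := by
    rw [htrP2, hsumS]
    have := hcon
    linarith
  have hineq2 : ∑ v ∈ S, P v v ≤ P.trace := by
    rw [Matrix.trace]
    exact Finset.sum_le_sum_of_subset_of_nonneg (Finset.subset_univ S)
      (fun v _ _ => aux_psd_diag_nonneg hPsd v)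
  have hNS : ∑ v ∈ S, N v v = 0 := by
    have h0 : 0 ≤ ∑ v ∈ S, N v v := Finset.sum_nonneg fun v _ => aux_psd_diag_nonneg hNsd v
    have h1 : ∑ v ∈ S, (P v v - N v v) = ∑ v ∈ S, P v v - ∑ v ∈ S, N v v :=
      Finset.sum_sub_distrib _ _
    linarith
  have hNaa : N a a = 0 := by
    have := (Finset.sum_eq_zero_iff_of_nonneg
      (fun v _ => aux_psd_diag_nonneg hNsd v)).mp hNS a haS
    exact this
  have hPcompl : ∀ v, v ∉ S → P v v = 0 := by
    intro v hv
    have hsplit : P.trace = ∑ v ∈ S, P v v + ∑ v ∈ Finset.univ \ S, P v v := by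
      have h := Finset.sum_sdiff (f := fun v => P v v) (Finset.subset_univ S)
      have ht : P.trace = ∑ v, P v v := rfl
      rw [ht, ← h]
      ring
    have hrest : ∑ v ∈ Finset.univ \ S, P v v ≤ 0 := by
      have h1 := Finset.sum_sub_distrib (s := S) (f := fun v => P v v) (g := fun v => N v v)
      linarith [hineq1, hNS, hineq2, hsplit.symm]
    have hzero : ∑ v ∈ Finset.univ \ S, P v v = 0 := le_antisymm hrest
      (Finset.sum_nonneg fun v _ => aux_psd_diag_nonneg hPsd v)
    exact (Finset.sum_eq_zero_iff_of_nonneg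
      (fun v _ => aux_psd_diag_nonneg hPsd v)).mp hzero v (by simp [Finset.mem_sdiff, hv])
  -- cross entries vanish
  have hNab : N a b = 0 := aux_psd_row_zero hNsd hNaa b
  have hPab : P a b = 0 := by
    have hPbb : P b b = 0 := hPcompl b hbS
    have := aux_psd_row_zero hPsd hPbb a
    rw [← this]
    exact congrFun (congrFun hPsd.1.symm b) a |>.symm.trans (by simp)
  -- but L a b = -σ a b ≠ 0
  have hne : a ≠ b := G.ne_of_adj hab
  have hLab : L a b = -σ a b := by
    rw [hL]
    simp [hne, hab]
  have hMab : P a b - N a b = L a b := by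
    have := congrFun (congrFun hPN a) b
    simpa [Matrix.sub_apply, Matrix.smul_apply, Matrix.one_apply, hne] using this
  rw [hPab, hNab, sub_zero, hLab] at hMab
  rcases hσ a b hab with h | h <;> rw [h] at hMab <;> norm_num at hMab
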